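/- The series ∑_{n≥0} 9(4n+1)(-1)^n / (8(n+1)(n+2)(1-2n)(3-2n)) · (C(2n,n)/4^n)^3 equals 1/π. -/

import Mathlib

open Filter Finset Topology


noncomputable def aa (n : ℕ) : ℝ := Nat.centralBinom n / 4 ^ n

lemma aa_pos (n : ℕ) : 0 < aa n :=
  div_pos (by exact_mod_cast Nat.centralBinom_pos n) (by positivity)

lemma aa_zero : aa 0 = 1 := by simp [aa, Nat.centralBinom]

lemma aa_succ (n : ℕ) : aa (n+1) = aa n * ((2*n+1)/(2*n+2)) := by
  have h := Nat.succ_mul_centralBinom_succ n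
  have h' : ((n:ℝ)+1) * (Nat.centralBinom (n+1) : ℝ)
      = 2 * (2*(n:ℝ)+1) * (Nat.centralBinom n : ℝ) := by exact_mod_cast h
  have hn : ((n:ℝ)+1) ≠ 0 := by positivity
  have h4 : (4:ℝ)^(n+1) ≠ 0 := by positivity
  have h4' : (4:ℝ)^n ≠ 0 := by positivity
  rw [aa, aa]
  rw [div_mul_div_comm, div_eq_div_iff h4 (by positivity)]
  have : (Nat.centralBinom (n+1) : ℝ) = 2 * (2*(n:ℝ)+1) * (Nat.centralBinom n : ℝ) / ((n:ℝ)+1) := by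
    field_simp at h' ⊢; linarith
  rw [this]
  field_simp
  ring

lemma aa_one : aa 1 = 1/2 := by
  have := aa_succ 0
  rw [aa_zero] at this; norm_num at this; simpa using this

lemma aa_le_one (n : ℕ) : aa n ≤ 1 := by
  induction n with
  | zero => simp [aa_zero]
  | succ k ih =>
    rw [aa_succ]
    have h1 : ((2*(k:ℝ)+1)/(2*(k:ℝ)+2)) ≤ 1 := by
      rw [div_le_one (by positivity)]; linarith
    calc aa k * ((2*(k:ℝ)+1)/(2*(k:ℝ)+2)) ≤ 1 * 1 := by
          apply mul_le_mul ih h1 (by positivity) zero_le_one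
      _ = 1 := by ring


noncomputable def qq (n m : ℕ) : ℝ := ∏ i ∈ range n, (((i:ℝ) - m) / ((m:ℝ) + 3/2 + i))

lemma qq_zero (m : ℕ) : qq 0 m = 1 := by simp [qq]

lemma qq_succ (n m : ℕ) : qq (n+1) m = qq n m * (((n:ℝ) - m) / ((m:ℝ) + 3/2 + n)) := by
  simp [qq, prod_range_succ]
  rw [div_mul_div_comm]

lemma qq_eq_zero {n m : ℕ} (h : m < n) : qq n m = 0 := by
  apply Finset.prod_eq_zero (Finset.mem_range.mpr h)
  simp

lemma qq_abs_le_one (n m : ℕ) : |qq n m| ≤ 1 := by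
  rw [qq, Finset.abs_prod]
  apply Finset.prod_le_one
  · intro i _; positivity
  · intro i _
    rw [abs_div, abs_of_pos (show (0:ℝ) < (m:ℝ) + 3/2 + i by positivity),
      div_le_one (by positivity)]
    rw [abs_le]
    have h1 : (0:ℝ) ≤ (i:ℝ) := Nat.cast_nonneg i
    have h2 : (0:ℝ) ≤ (m:ℝ) := Nat.cast_nonneg m
    constructor <;> linarith

-- key relation across m
lemma qq_succ_m (k m : ℕ) : qq (k+1) (m+1)
    = qq k m * ((-(m:ℝ)-1) * ((m:ℝ)+3/2)) / (((m:ℝ)+(k:ℝ)+3/2) * ((m:ℝ)+(k:ℝ)+5/2)) := by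
  induction k with
  | zero =>
    rw [qq_succ, qq_zero, qq_zero]
    push_cast
    field_simp
    ring
  | succ k ih =>
    rw [qq_succ, ih, qq_succ]
    push_cast
    field_simp
    ring

noncomputable def uu (n m : ℕ) : ℝ :=
  (4*(n:ℝ)+1) * aa n ^ 3 * qq n m /
    ((2*(n:ℝ)-3) * (2*(n:ℝ)-1) * ((n:ℝ)+1) * ((n:ℝ)+2))

noncomputable def gg (n m : ℕ) : ℝ :=
  (2*(m:ℝ)+3) * (n:ℝ)^2 * ((n:ℝ)+2) * aa n ^ 3 * qq (n-1) m /
    (((m:ℝ)+1) * ((m:ℝ)+3) * (2*(n:ℝ)-3) * (2*(n:ℝ)-1) * ((n:ℝ)+1) * ((n:ℝ)+2)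
      * ((m:ℝ)+(n:ℝ)+1/2))

lemma two_n_sub_three_ne (n : ℕ) : (2*(n:ℝ)-3) ≠ 0 := by
  intro h
  have : (2*n : ℝ) = 3 := by linarith
  have : 2*n = 3 := by exact_mod_cast this
  omega

lemma two_n_sub_one_ne (n : ℕ) : (2*(n:ℝ)-1) ≠ 0 := by
  intro h
  have : (2*n : ℝ) = 1 := by linarith
  have : 2*n = 1 := by exact_mod_cast this
  omega

set_option maxHeartbeats 3000000 in
lemma sh1 (A q c d e : ℝ) : A*(q*c/d)/e = A*(q*c)/(d*e) := by
  simp only [div_eq_mul_inv, mul_inv]; ring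

lemma sh2 (A q s d e : ℝ) : A*(q*(s/d))/e = A*(q*s)/(d*e) := by
  simp only [div_eq_mul_inv, mul_inv]; ring

lemma sh3 (A a P Q q s d e : ℝ) :
    A*(a*(P/Q))^3*(q*(s/d))/e = A*(a^3*P^3*(q*s))/(Q^3*(d*e)) := by
  simp only [div_eq_mul_inv, mul_inv, mul_pow, inv_pow]; ring

lemma wz (n m : ℕ) :
    uu n (m+1) - ((2*(m:ℝ)+3)*(2*(m:ℝ)+5)/((2*(m:ℝ)+2)*(2*(m:ℝ)+6))) * uu n m
      = gg (n+1) m - gg n m := by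
  match n with
  | 0 =>
    simp only [uu, gg]
    norm_num [qq_zero, aa_one, aa_zero]
    have hm1 : ((m:ℝ)+1) ≠ 0 := by positivity
    have hm3 : ((m:ℝ)+3) ≠ 0 := by positivity
    have hm12 : ((m:ℝ)+1+1/2) ≠ 0 := by positivity
    have hm2 : (2*(m:ℝ)+2) ≠ 0 := by positivity
    have hm6 : (2*(m:ℝ)+6) ≠ 0 := by positivity
    field_simp
    ring
  | k+1 =>
    have e1 : qq (k+1) (m+1)
        = qq k m * ((-(m:ℝ)-1) * ((m:ℝ)+3/2)) / (((m:ℝ)+(k:ℝ)+3/2) * ((m:ℝ)+(k:ℝ)+5/2)) :=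
      qq_succ_m k m
    have e2 : qq (k+1) m = qq k m * (((k:ℝ) - m) / ((m:ℝ) + 3/2 + k)) := qq_succ k m
    have e3 : aa (k+2) = aa (k+1) * ((2*((k:ℝ)+1)+1)/(2*((k:ℝ)+1)+2)) := by
      have := aa_succ (k+1); push_cast at this ⊢; exact this
    simp only [uu, gg, Nat.add_sub_cancel]
    rw [e1, e2, e3]
    push_cast
    rw [sh1, sh2, sh3, div_mul_div_comm]
    have x1 : (2*((k:ℝ)+1)-3) ≠ 0 := by
      have h := two_n_sub_three_ne (k+1); push_cast at h; intro hc; apply h; linarith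
    have x2 : (2*((k:ℝ)+1)-1) ≠ 0 := by
      have h := two_n_sub_one_ne (k+1); push_cast at h; intro hc; apply h; linarith
    have x3 : (2*((k:ℝ)+1+1)-3) ≠ 0 := by
      have h := two_n_sub_three_ne (k+2); push_cast at h; intro hc; apply h; linarith
    have x4 : (2*((k:ℝ)+1+1)-1) ≠ 0 := by
      have h := two_n_sub_one_ne (k+2); push_cast at h; intro hc; apply h; linarith
    have y1 : ((k:ℝ)+1+1) ≠ 0 := by positivity
    have y2 : ((k:ℝ)+1+2) ≠ 0 := by positivity
    have y3 : ((k:ℝ)+1+1+1) ≠ 0 := by positivity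
    have y4 : ((k:ℝ)+1+1+2) ≠ 0 := by positivity
    have y5 : (2*((k:ℝ)+1)+2) ≠ 0 := by positivity
    have y6 : ((2*((k:ℝ)+1)+2)^3) ≠ 0 := pow_ne_zero 3 y5
    have z1 : ((m:ℝ)+1) ≠ 0 := by positivity
    have z2 : ((m:ℝ)+3) ≠ 0 := by positivity
    have z3 : ((m:ℝ)+↑k+3/2) ≠ 0 := by positivity
    have z4 : ((m:ℝ)+↑k+5/2) ≠ 0 := by positivity
    have z5 : ((m:ℝ)+3/2+↑k) ≠ 0 := by positivity
    have z6 : (2*(m:ℝ)+2) ≠ 0 := by positivity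
    have z7 : (2*(m:ℝ)+6) ≠ 0 := by positivity
    have z8 : ((m:ℝ)+((k:ℝ)+1)+1/2) ≠ 0 := by positivity
    have z9 : ((m:ℝ)+((k:ℝ)+1+1)+1/2) ≠ 0 := by positivity
    have hDA : ((m:ℝ)+↑k+3/2)*((m:ℝ)+↑k+5/2)*((2*((k:ℝ)+1)-3)*(2*((k:ℝ)+1)-1)*((k:ℝ)+1+1)*((k:ℝ)+1+2)) ≠ 0 := by
      apply_rules [mul_ne_zero]
    have hDB : (2*(m:ℝ)+2)*(2*(m:ℝ)+6)*(((m:ℝ)+3/2+↑k)*((2*((k:ℝ)+1)-3)*(2*((k:ℝ)+1)-1)*((k:ℝ)+1+1)*((k:ℝ)+1+2))) ≠ 0 := by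
      apply_rules [mul_ne_zero]
    have hDC : ((2*((k:ℝ)+1)+2)^3)*(((m:ℝ)+3/2+↑k)*(((m:ℝ)+1)*((m:ℝ)+3)*(2*((k:ℝ)+1+1)-3)*(2*((k:ℝ)+1+1)-1)*((k:ℝ)+1+1+1)*((k:ℝ)+1+1+2)*((m:ℝ)+((k:ℝ)+1+1)+1/2))) ≠ 0 := by
      apply_rules [mul_ne_zero]
    have hDD : ((m:ℝ)+1)*((m:ℝ)+3)*(2*((k:ℝ)+1)-3)*(2*((k:ℝ)+1)-1)*((k:ℝ)+1+1)*((k:ℝ)+1+2)*((m:ℝ)+((k:ℝ)+1)+1/2) ≠ 0 := by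
      apply_rules [mul_ne_zero]
    rw [div_sub_div _ _ hDA hDB, div_sub_div _ _ hDC hDD,
      div_eq_div_iff (mul_ne_zero hDA hDB) (mul_ne_zero hDC hDD)]
    ring

lemma aa_two : aa 2 = 3/8 := by
  have := aa_succ 1; rw [aa_one] at this; norm_num at this; exact this

lemma sum_u (m : ℕ) :
    ∑ n ∈ range (m+1), uu n m = 4/9*(2*(m:ℝ)+1)*(aa m)*(aa (m+2)) := by
  induction m with
  | zero =>
    simp [uu, qq_zero, aa_zero, aa_two]
    norm_num
  | succ m ih =>
    have gg0 : gg 0 m = 0 := by simp [gg]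
    have ggtop : gg (m+2) m = 0 := by
      have h : qq (m+1) m = 0 := qq_eq_zero (by omega)
      simp [gg, show m+2-1 = m+1 from rfl, h]
    have utop : uu (m+1) m = 0 := by
      have : qq (m+1) m = 0 := qq_eq_zero (by omega)
      simp [uu, this]
    have tele : ∑ n ∈ range (m+2), (gg (n+1) m - gg n m) = gg (m+2) m - gg 0 m :=
      Finset.sum_range_sub (fun n => gg n m) (m+2)
    have step : ∑ n ∈ range (m+2), uu n (m+1)
        = ((2*(m:ℝ)+3)*(2*(m:ℝ)+5)/((2*(m:ℝ)+2)*(2*(m:ℝ)+6))) * ∑ n ∈ range (m+2), uu n m := by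
      have : ∑ n ∈ range (m+2), uu n (m+1)
          = ∑ n ∈ range (m+2), (((2*(m:ℝ)+3)*(2*(m:ℝ)+5)/((2*(m:ℝ)+2)*(2*(m:ℝ)+6))) * uu n m
              + (gg (n+1) m - gg n m)) := by
        apply Finset.sum_congr rfl
        intro n _
        have h := wz n m
        linarith
      rw [this, Finset.sum_add_distrib, tele, gg0, ggtop, Finset.mul_sum]
      ring
    have sum2 : ∑ n ∈ range (m+2), uu n m = 4/9*(2*(m:ℝ)+1)*(aa m)*(aa (m+2)) := by
      rw [Finset.sum_range_succ, utop, add_zero, ih]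
    rw [step, sum2]
    have e1 : aa (m+1) = aa m * ((2*(m:ℝ)+1)/(2*(m:ℝ)+2)) := by
      have := aa_succ m; push_cast at this ⊢; exact this
    have e2 : aa (m+3) = aa (m+2) * ((2*(m:ℝ)+5)/(2*(m:ℝ)+6)) := by
      have := aa_succ (m+2); push_cast at this ⊢
      convert this using 3 <;> ring
    push_cast
    rw [e1, e2]
    have h2 : (2*(m:ℝ)+2) ≠ 0 := by positivity
    have h6 : (2*(m:ℝ)+6) ≠ 0 := by positivity
    field_simp
    ring

lemma aa_ne (n : ℕ) : aa n ≠ 0 := (aa_pos n).ne'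

lemma W_aa : ∀ k : ℕ, Real.Wallis.W k = ((2*(k:ℝ)+1) * aa k ^ 2)⁻¹ := by
  intro k
  induction k with
  | zero => simp [Real.Wallis.W, aa_zero]
  | succ k ih =>
    rw [Real.Wallis.W_succ, ih]
    have e1 : aa (k+1) = aa k * ((2*(k:ℝ)+1)/(2*(k:ℝ)+2)) := by
      have := aa_succ k; push_cast at this ⊢; exact this
    rw [e1]
    push_cast
    have h1 : (2*(k:ℝ)+1) ≠ 0 := by positivity
    have h2 : (2*(k:ℝ)+2) ≠ 0 := by positivity
    have h3 : (2*(k:ℝ)+3) ≠ 0 := by positivity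
    have h4 : aa k ≠ 0 := aa_ne k
    field_simp
    ring

lemma lim_aa : Tendsto (fun m : ℕ => (2*(m:ℝ)+1) * aa m ^ 2) atTop (𝓝 (2/Real.pi)) := by
  have h := Real.tendsto_prod_pi_div_two
  have h2 : Tendsto (fun k : ℕ => (Real.Wallis.W k)⁻¹) atTop (𝓝 ((Real.pi/2)⁻¹)) :=
    h.inv₀ (by positivity)
  have h3 : (Real.pi/2)⁻¹ = 2/Real.pi := by
    rw [inv_div]
  rw [h3] at h2
  have h4 : (fun k : ℕ => (Real.Wallis.W k)⁻¹) = fun m : ℕ => (2*(m:ℝ)+1) * aa m ^ 2 := by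
    funext k
    rw [W_aa k, inv_inv]
  rwa [h4] at h2

lemma tendsto_ratio : Tendsto (fun m : ℕ =>
    ((2*(m:ℝ)+1)/(2*(m:ℝ)+2))*((2*(m:ℝ)+3)/(2*(m:ℝ)+4))) atTop (𝓝 1) := by
  have hden : ∀ (c : ℝ), Tendsto (fun m : ℕ => 2*(m:ℝ)+c) atTop atTop := by
    intro c
    apply tendsto_atTop_add_const_right
    exact (tendsto_natCast_atTop_atTop (R := ℝ)).const_mul_atTop (by norm_num)
  have hf : ∀ (a c : ℝ), 0 < c → Tendsto (fun m : ℕ => (2*(m:ℝ)+a)/(2*(m:ℝ)+c)) atTop (𝓝 1) := by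
    intro a c hc
    have h0 : Tendsto (fun m : ℕ => (a-c)/(2*(m:ℝ)+c)) atTop (𝓝 0) :=
      Tendsto.div_atTop tendsto_const_nhds (hden c)
    have h1 : Tendsto (fun m : ℕ => 1 + (a-c)/(2*(m:ℝ)+c)) atTop (𝓝 1) := by
      simpa using tendsto_const_nhds.add h0
    apply h1.congr
    intro m
    have hm : (0:ℝ) ≤ (m:ℝ) := Nat.cast_nonneg m
    have hne : (2*(m:ℝ)+c) ≠ 0 := by intro hz; nlinarith
    field_simp
    ring
  simpa using (hf 1 2 (by norm_num)).mul (hf 3 4 (by norm_num))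


lemma tendsto_qq (n : ℕ) : Tendsto (fun m : ℕ => qq n m) atTop (𝓝 ((-1:ℝ)^n)) := by
  have hfac : ∀ i : ℕ, Tendsto (fun m : ℕ => (((i:ℝ) - m) / ((m:ℝ) + 3/2 + i))) atTop (𝓝 (-1)) := by
    intro i
    have hden : Tendsto (fun m : ℕ => ((m:ℝ) + 3/2 + i)) atTop atTop := by
      apply tendsto_atTop_add_const_right
      exact tendsto_atTop_add_const_right _ _ (tendsto_natCast_atTop_atTop (R := ℝ))
    have h0 : Tendsto (fun m : ℕ => (2*(i:ℝ)+3/2)/((m:ℝ) + 3/2 + i)) atTop (𝓝 0) :=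
      Tendsto.div_atTop tendsto_const_nhds hden
    have h1 : Tendsto (fun m : ℕ => -1 + (2*(i:ℝ)+3/2)/((m:ℝ) + 3/2 + i)) atTop (𝓝 (-1)) := by
      simpa using tendsto_const_nhds.add h0
    apply h1.congr
    intro m
    have hne : ((m:ℝ) + 3/2 + i) ≠ 0 := by positivity
    field_simp
    ring
  have hmain : Tendsto (fun m : ℕ => ∏ i ∈ range n, (((i:ℝ) - m) / ((m:ℝ) + 3/2 + i)))
      atTop (𝓝 (∏ i ∈ range n, (-1:ℝ))) :=
    tendsto_finset_prod (range n) (fun i _ => hfac i)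
  simpa [qq] using hmain

lemma abs_den_fact (n : ℕ) : (4*(n:ℝ)+1) ≤ 5*(|2*(n:ℝ)-3| * |2*(n:ℝ)-1|) := by
  match n with
  | 0 => norm_num
  | 1 => norm_num
  | (k+2) =>
    push_cast
    have h0 : (0:ℝ) ≤ (k:ℝ) := Nat.cast_nonneg k
    rw [abs_of_pos (by linarith), abs_of_pos (by linarith)]
    nlinarith

lemma uu_abs_le (n m : ℕ) : |uu n m| ≤ 5/(((n:ℝ)+1)*((n:ℝ)+2)) := by
  have h0 : (0:ℝ) ≤ (n:ℝ) := Nat.cast_nonneg n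
  have habs3 : (0:ℝ) < |2*(n:ℝ)-3| := abs_pos.mpr (two_n_sub_three_ne n)
  have habs1 : (0:ℝ) < |2*(n:ℝ)-1| := abs_pos.mpr (two_n_sub_one_ne n)
  have hqa : |qq n m| ≤ 1 := qq_abs_le_one n m
  have ha1 : aa n ^ 3 ≤ 1 := pow_le_one₀ (aa_pos n).le (aa_le_one n)
  have ha0 : (0:ℝ) < aa n ^ 3 := pow_pos (aa_pos n) 3
  have heq : |uu n m| = ((4*(n:ℝ)+1) * aa n ^ 3 * |qq n m|) /
      (|2*(n:ℝ)-3| * |2*(n:ℝ)-1| * ((n:ℝ)+1) * ((n:ℝ)+2)) := by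
    rw [uu, abs_div]
    rw [abs_mul, abs_mul, abs_mul, abs_mul, abs_mul]
    rw [abs_of_pos (show (0:ℝ) < 4*(n:ℝ)+1 by linarith), abs_of_pos ha0,
      abs_of_pos (show (0:ℝ) < (n:ℝ)+1 by linarith),
      abs_of_pos (show (0:ℝ) < (n:ℝ)+2 by linarith)]
  have hp1 : (0:ℝ) < (n:ℝ)+1 := by linarith
  have hp2 : (0:ℝ) < (n:ℝ)+2 := by linarith
  rw [heq, div_le_div_iff₀ (mul_pos (mul_pos (mul_pos habs3 habs1) hp1) hp2) (mul_pos hp1 hp2)]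
  have hfac := abs_den_fact n
  have hq0 : (0:ℝ) ≤ |qq n m| := abs_nonneg _
  have hstep : aa n ^ 3 * |qq n m| ≤ 1 := by nlinarith
  have hnum : ((4*(n:ℝ)+1) * aa n ^ 3 * |qq n m|) ≤ (4*(n:ℝ)+1) := by
    have h41 : (0:ℝ) ≤ 4*(n:ℝ)+1 := by linarith
    have := mul_le_mul_of_nonneg_left hstep h41
    nlinarith
  have hnum0 : (0:ℝ) ≤ ((4*(n:ℝ)+1) * aa n ^ 3 * |qq n m|) := by positivity
  nlinarith [mul_pos habs3 habs1, mul_pos hp1 hp2,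
    mul_le_mul_of_nonneg_right hnum (le_of_lt (mul_pos hp1 hp2)),
    mul_le_mul_of_nonneg_right hfac (le_of_lt (mul_pos hp1 hp2))]

lemma summable_bound : Summable (fun n : ℕ => 5/(((n:ℝ)+1)*((n:ℝ)+2))) := by
  have h2 : Summable (fun n : ℕ => 1/((n:ℝ)+1)^2) := by
    have h3 := (summable_nat_add_iff 1).mpr
      ((Real.summable_one_div_nat_pow (p := 2)).mpr one_lt_two)
    apply h3.congr
    intro n
    push_cast
    ring
  have h1 : Summable (fun n : ℕ => 1/(((n:ℝ)+1)*((n:ℝ)+2))) := by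
    apply Summable.of_nonneg_of_le _ _ h2
    · intro n; positivity
    · intro n
      have hc : (0:ℝ) ≤ (n:ℝ) := Nat.cast_nonneg n
      exact one_div_le_one_div_of_le (by positivity) (by nlinarith)
  have h5 := h1.mul_left 5
  apply h5.congr
  intro n
  rw [mul_one_div]

noncomputable def tgt (n : ℕ) : ℝ :=
  (9 * (4 * (n : ℝ) + 1) * (-1) ^ n /
        (8 * ((n:ℝ) + 1) * ((n:ℝ) + 2) * (1 - 2 * (n:ℝ)) * (3 - 2 * (n:ℝ)))) *
      ((Nat.centralBinom n : ℝ) / 4 ^ n) ^ 3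

lemma hab (n : ℕ) : Tendsto (fun m : ℕ => 9/8 * uu n m) atTop (𝓝 (tgt n)) := by
  have hrw : (fun m : ℕ => 9/8 * uu n m)
      = fun m : ℕ => (9/8 * ((4*(n:ℝ)+1) * aa n ^ 3) /
          ((2*(n:ℝ)-3) * (2*(n:ℝ)-1) * ((n:ℝ)+1) * ((n:ℝ)+2))) * qq n m := by
    funext m
    rw [uu]
    simp only [div_eq_mul_inv]
    ring
  rw [hrw]
  have h := (tendsto_qq n).const_mul (9/8 * ((4*(n:ℝ)+1) * aa n ^ 3) /
      ((2*(n:ℝ)-3) * (2*(n:ℝ)-1) * ((n:ℝ)+1) * ((n:ℝ)+2)))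
  convert h using 1
  rw [tgt]
  have h1 : (1 - 2*(n:ℝ)) ≠ 0 := by
    have := two_n_sub_one_ne n; intro hc; apply this; linarith
  have h2 : (3 - 2*(n:ℝ)) ≠ 0 := by
    have := two_n_sub_three_ne n; intro hc; apply this; linarith
  have h3 : (2*(n:ℝ)-3) ≠ 0 := two_n_sub_three_ne n
  have h4 : (2*(n:ℝ)-1) ≠ 0 := two_n_sub_one_ne n
  have h5 : ((n:ℝ)+1) ≠ 0 := by positivity
  have h6 : ((n:ℝ)+2) ≠ 0 := by positivity
  rw [show ((Nat.centralBinom n : ℝ) / 4 ^ n) = aa n from rfl]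
  field_simp
  ring

lemma tsum_u (m : ℕ) : ∑' n : ℕ, 9/8 * uu n m = 1/2*(2*(m:ℝ)+1)*(aa m)*(aa (m+2)) := by
  have hvanish : ∀ n ∉ range (m+1), 9/8 * uu n m = 0 := by
    intro n hn
    rw [Finset.mem_range, not_lt] at hn
    have : qq n m = 0 := qq_eq_zero (by omega)
    simp [uu, this]
  rw [tsum_eq_sum hvanish, ← Finset.mul_sum, sum_u]
  ring

theorem stmt_3 :
    ∑' n : ℕ, (9 * (4 * (n : ℝ) + 1) * (-1) ^ n /
        (8 * (n + 1) * (n + 2) * (1 - 2 * n) * (3 - 2 * n))) *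
      ((Nat.centralBinom n : ℝ) / 4 ^ n) ^ 3 = 1 / Real.pi := by
  have hbound : ∀ m : ℕ, ∀ n : ℕ, ‖9/8 * uu n m‖ ≤ 9/8 * (5/(((n:ℝ)+1)*((n:ℝ)+2))) := by
    intro m n
    rw [Real.norm_eq_abs, abs_mul, abs_of_pos (show (0:ℝ) < 9/8 by norm_num)]
    have := uu_abs_le n m
    nlinarith [abs_nonneg (uu n m)]
  have hsum : Summable (fun n : ℕ => 9/8 * (5/(((n:ℝ)+1)*((n:ℝ)+2)))) :=
    summable_bound.mul_left _
  have hDCT := tendsto_tsum_of_dominated_convergence (𝓕 := atTop)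
    (f := fun (m : ℕ) (n : ℕ) => 9/8 * uu n m) (g := tgt) hsum hab
    (Filter.Eventually.of_forall hbound)
  have heq : (fun m : ℕ => ∑' n : ℕ, 9/8 * uu n m)
      = fun m : ℕ => 1/2*((2*(m:ℝ)+1)*(aa m)^2)*(((2*(m:ℝ)+1)/(2*(m:ℝ)+2))*((2*(m:ℝ)+3)/(2*(m:ℝ)+4))) := by
    funext m
    rw [tsum_u]
    have e1 : aa (m+1) = aa m * ((2*(m:ℝ)+1)/(2*(m:ℝ)+2)) := by
      have := aa_succ m; push_cast at this ⊢; exact this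
    have e2 : aa (m+2) = aa (m+1) * ((2*(m:ℝ)+3)/(2*(m:ℝ)+4)) := by
      have := aa_succ (m+1); push_cast at this ⊢
      convert this using 3 <;> ring
    rw [e2, e1]
    ring
  rw [heq] at hDCT
  have hlim : Tendsto (fun m : ℕ =>
      1/2*((2*(m:ℝ)+1)*(aa m)^2)*(((2*(m:ℝ)+1)/(2*(m:ℝ)+2))*((2*(m:ℝ)+3)/(2*(m:ℝ)+4))))
      atTop (𝓝 (1/Real.pi)) := by
    have h := (lim_aa.const_mul (1/2)).mul tendsto_ratio
    have : 1/2 * (2/Real.pi) * 1 = 1/Real.pi := by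
      rw [mul_one]; field_simp
    rwa [this] at h
  have := tendsto_nhds_unique hDCT hlim
  rw [← this]
  rfl
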